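/- Let E : B → A be a conditional expectation with Index E = 2. Then (1−e_A) C*⟨B, e_A⟩ (1−e_A) = A(1−e_A), and the map a ↦ a(1−e_A) is an isomorphism of A onto A(1−e_A). -/

import Mathlib

/- Watatani-style conditional expectations, quasi-bases, and the C*-basic
construction, formalized abstractly. -/

noncomputable section

/-- A conditional expectation of a unital C*-algebra `B` onto a C*-subalgebra `A`. -/
structure CondExp (B : Type*) [NormedRing B] [StarRing B] [NormedAlgebra ℂ B] [StarModule ℂ B]
    (A : StarSubalgebra ℂ B) where
  toFun : B →ₗ[ℂ] B
  mem_range : ∀ b, toFun b ∈ A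
  fixes : ∀ a ∈ A, toFun a = a
  left_mod : ∀ a ∈ A, ∀ b, toFun (a * b) = a * toFun b
  right_mod : ∀ a ∈ A, ∀ b, toFun (b * a) = toFun b * a
  star_map : ∀ b, toFun (star b) = star (toFun b)
  pos : ∀ b, ∃ c, toFun (star b * b) = star c * c

/-- `x` is a quasi-basis for the conditional expectation `E` (with pairs `(x i, (x i)*)`). -/
def IsQuasiBasis {B : Type*} [NormedRing B] [StarRing B] [NormedAlgebra ℂ B] [StarModule ℂ B]
    {A : StarSubalgebra ℂ B} (E : CondExp B A) {n : ℕ} (x : Fin n → B) : Prop :=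
  (∀ b, ∑ i, x i * E.toFun (star (x i) * b) = b) ∧
  (∀ b, ∑ i, E.toFun (b * x i) * star (x i) = b)

/-- The C*-basic construction `C = C*⟨B, e_A⟩` of a conditional expectation `E : B → A`,
with Jones projection `e`. -/
structure BasicConstruction {B : Type*} [NormedRing B] [StarRing B] [NormedAlgebra ℂ B] [StarModule ℂ B]
    {A : StarSubalgebra ℂ B} (E : CondExp B A)
    (C : Type*) [NormedRing C] [StarRing C] [NormedAlgebra ℂ C] [StarModule ℂ C] where
  ι : B →⋆ₐ[ℂ] C
  inj : Function.Injective ι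
  e : C
  e_star : star e = e
  e_idem : e * e = e
  jones : ∀ b, e * ι b * e = ι (E.toFun b) * e
  dense : (Submodule.span ℂ {y : C | ∃ b c : B, y = ι b * e * ι c}).topologicalClosure = ⊤
  mul_e_inj : ∀ b : B, ι b * e = 0 → b = 0

namespace Watatani

variable {B C : Type*} [CStarAlgebra B] [CStarAlgebra C]
  {A : StarSubalgebra ℂ B} (E : CondExp B A) (bc : BasicConstruction E C)

/-- density principle -/
private lemma dens (u v : C)
    (h : ∀ b c : B, u * (bc.ι b * bc.e * bc.ι c) = v * (bc.ι b * bc.e * bc.ι c)) : u = v := by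
  let f : C →ₗ[ℂ] C := LinearMap.mulLeft ℂ u - LinearMap.mulLeft ℂ v
  have hker : Submodule.span ℂ {y : C | ∃ b c : B, y = bc.ι b * bc.e * bc.ι c}
      ≤ LinearMap.ker f := by
    rw [Submodule.span_le]
    rintro y ⟨b, c, rfl⟩
    simp only [SetLike.mem_coe, LinearMap.mem_ker, f, LinearMap.sub_apply,
      LinearMap.mulLeft_apply, sub_eq_zero]
    exact h b c
  have hcont : Continuous f := by
    have : Continuous fun z : C => u * z - v * z := by fun_prop
    exact this.congr fun z => by simp [f]
  have hcl : IsClosed (LinearMap.ker f : Set C) := by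
    have : (LinearMap.ker f : Set C) = f ⁻¹' {0} := by ext z; simp [LinearMap.mem_ker]
    rw [this]
    exact isClosed_singleton.preimage hcont
  have hle : (Submodule.span ℂ {y : C | ∃ b c : B, y = bc.ι b * bc.e * bc.ι c}).topologicalClosure
      ≤ LinearMap.ker f := Submodule.topologicalClosure_minimal _ hker hcl
  rw [bc.dense] at hle
  have h1 : f 1 = 0 := hle Submodule.mem_top
  simpa [f, LinearMap.sub_apply, LinearMap.mulLeft_apply, sub_eq_zero] using h1

private lemma hiota (a b : B) (z : C) : bc.ι a * (bc.ι b * z) = bc.ι (a * b) * z := by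
  rw [← mul_assoc, ← map_mul]

private lemma hj (b : B) (z : C) :
    bc.e * (bc.ι b * (bc.e * z)) = bc.ι (E.toFun b) * (bc.e * z) := by
  calc bc.e * (bc.ι b * (bc.e * z)) = (bc.e * bc.ι b * bc.e) * z := by simp only [mul_assoc]
  _ = (bc.ι (E.toFun b) * bc.e) * z := by rw [bc.jones]
  _ = bc.ι (E.toFun b) * (bc.e * z) := by simp only [mul_assoc]

private lemma comm_e {a : B} (ha : a ∈ A) : bc.e * bc.ι a = bc.ι a * bc.e := by
  apply dens E bc
  intro b c
  simp only [mul_assoc]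
  rw [hiota, hj, hj, hiota, E.left_mod a ha b]

private lemma p_one {n : ℕ} (x : Fin n → B) (hx : IsQuasiBasis E x) :
    ∑ i, bc.ι (x i) * bc.e * bc.ι (star (x i)) = 1 := by
  apply dens E bc
  intro b c
  rw [Finset.sum_mul, one_mul]
  have hterm : ∀ i, bc.ι (x i) * bc.e * bc.ι (star (x i)) * (bc.ι b * bc.e * bc.ι c)
      = bc.ι (x i * E.toFun (star (x i) * b)) * (bc.e * bc.ι c) := by
    intro i
    simp only [mul_assoc]
    rw [hiota, hj, hiota]
  rw [Finset.sum_congr rfl fun i _ => hterm i, ← Finset.sum_mul, ← map_sum, hx.1 b,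
    mul_assoc]

section Quasi

variable {n : ℕ} (x : Fin n → B)

private lemma E_one : E.toFun 1 = 1 := E.fixes 1 (one_mem A)

private lemma E_idem (b : B) : E.toFun (E.toFun b) = E.toFun b := E.fixes _ (E.mem_range b)

private lemma E_P (b : B) : E.toFun (b - E.toFun b) = 0 := by
  rw [map_sub, E_idem, sub_self]

private lemma sum_x_Ex (hx : IsQuasiBasis E x) : ∑ i, x i * E.toFun (star (x i)) = 1 := by
  have := hx.1 1
  simpa using this

private lemma sum_Ex_x (hx : IsQuasiBasis E x) : ∑ i, E.toFun (x i) * star (x i) = 1 := by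
  have := hx.2 1
  simpa using this

private lemma sum_ExEx (hx : IsQuasiBasis E x) :
    ∑ i, E.toFun (x i) * E.toFun (star (x i)) = 1 := by
  have h1 : E.toFun (∑ i, x i * E.toFun (star (x i))) = E.toFun 1 := by rw [sum_x_Ex E x hx]
  rw [map_sum, E_one] at h1
  rw [← h1]
  refine Finset.sum_congr rfl fun i _ => ?_
  rw [E.right_mod (E.toFun (star (x i))) (E.mem_range _) (x i)]

private lemma sum_yy (hx : IsQuasiBasis E x) (hidx : ∑ i, x i * star (x i) = (2 : B)) :
    ∑ i, (x i - E.toFun (x i)) * star (x i - E.toFun (x i)) = 1 := by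
  have expand : ∀ i, (x i - E.toFun (x i)) * star (x i - E.toFun (x i))
      = x i * star (x i) - x i * E.toFun (star (x i)) - E.toFun (x i) * star (x i)
        + E.toFun (x i) * E.toFun (star (x i)) := by
    intro i
    rw [star_sub, ← E.star_map]
    noncomm_ring
  rw [Finset.sum_congr rfl fun i _ => expand i]
  simp only [Finset.sum_add_distrib, Finset.sum_sub_distrib]
  rw [hidx, sum_x_Ex E x hx, sum_Ex_x E x hx, sum_ExEx E x hx, ← one_add_one_eq_two]
  noncomm_ring

private lemma sum_xE (hx : IsQuasiBasis E x) (b : B) :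
    ∑ i, E.toFun (x i) * E.toFun (star (x i) * b) = E.toFun b := by
  have : ∀ i : Fin n, E.toFun (x i) * E.toFun (star (x i) * b)
      = E.toFun (x i * E.toFun (star (x i) * b)) := fun i =>
    (E.right_mod (E.toFun (star (x i) * b)) (E.mem_range _) (x i)).symm
  rw [Finset.sum_congr rfl fun i _ => this i, ← map_sum, hx.1]

private lemma sum_Ex_right (hx : IsQuasiBasis E x) (b : B) :
    ∑ i, E.toFun (b * x i) * E.toFun (star (x i)) = E.toFun b := by
  have : ∀ i : Fin n, E.toFun (b * x i) * E.toFun (star (x i))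
      = E.toFun (E.toFun (b * x i) * star (x i)) := fun i =>
    (E.left_mod (E.toFun (b * x i)) (E.mem_range _) (star (x i))).symm
  rw [Finset.sum_congr rfl fun i _ => this i, ← map_sum, hx.2]

private lemma P_exp1 (hx : IsQuasiBasis E x) (b : B) :
    ∑ i, (x i - E.toFun (x i)) * E.toFun (star (x i - E.toFun (x i)) * b)
      = b - E.toFun b := by
  have hterm : ∀ i : Fin n, (x i - E.toFun (x i)) * E.toFun (star (x i - E.toFun (x i)) * b)
      = x i * E.toFun (star (x i) * b) - x i * (E.toFun (star (x i)) * E.toFun b)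
        - E.toFun (x i) * E.toFun (star (x i) * b)
        + E.toFun (x i) * (E.toFun (star (x i)) * E.toFun b) := by
    intro i
    have harg : E.toFun (star (x i - E.toFun (x i)) * b)
        = E.toFun (star (x i) * b) - E.toFun (star (x i)) * E.toFun b := by
      rw [star_sub, ← E.star_map, sub_mul, map_sub, E.left_mod _ (E.mem_range _) b]
    rw [harg]
    noncomm_ring
  rw [Finset.sum_congr rfl fun i _ => hterm i]
  simp only [Finset.sum_add_distrib, Finset.sum_sub_distrib]
  have h2 : ∑ i, x i * (E.toFun (star (x i)) * E.toFun b)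
      = (∑ i, x i * E.toFun (star (x i))) * E.toFun b := by
    rw [Finset.sum_mul]
    exact Finset.sum_congr rfl fun i _ => (mul_assoc _ _ _).symm
  have h4 : ∑ i, E.toFun (x i) * (E.toFun (star (x i)) * E.toFun b)
      = (∑ i, E.toFun (x i) * E.toFun (star (x i))) * E.toFun b := by
    rw [Finset.sum_mul]
    exact Finset.sum_congr rfl fun i _ => (mul_assoc _ _ _).symm
  rw [hx.1, h2, h4, sum_x_Ex E x hx, sum_ExEx E x hx, sum_xE E x hx]
  simp only [one_mul]
  noncomm_ring

private lemma P_exp2 (hx : IsQuasiBasis E x) (b : B) :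
    ∑ i, E.toFun (b * (x i - E.toFun (x i))) * star (x i - E.toFun (x i))
      = b - E.toFun b := by
  have hterm : ∀ i : Fin n, E.toFun (b * (x i - E.toFun (x i))) * star (x i - E.toFun (x i))
      = E.toFun (b * x i) * star (x i) - E.toFun (b * x i) * E.toFun (star (x i))
        - E.toFun b * (E.toFun (x i) * star (x i))
        + E.toFun b * (E.toFun (x i) * E.toFun (star (x i))) := by
    intro i
    rw [mul_sub, map_sub, E.right_mod _ (E.mem_range _) b, star_sub, ← E.star_map]
    noncomm_ring
  rw [Finset.sum_congr rfl fun i _ => hterm i]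
  simp only [Finset.sum_add_distrib, Finset.sum_sub_distrib]
  rw [hx.2, sum_Ex_right E x hx, ← Finset.mul_sum, ← Finset.mul_sum,
    sum_Ex_x E x hx, sum_ExEx E x hx]
  simp only [mul_one]
  noncomm_ring

private lemma g_decomp (bc : BasicConstruction E C) (hx : IsQuasiBasis E x)
    (hidx : ∑ i, x i * star (x i) = (2 : B)) :
    (1 : C) - bc.e
      = ∑ i, bc.ι (x i - E.toFun (x i)) * bc.e * bc.ι (star (x i - E.toFun (x i))) := by
  have hterm : ∀ i : Fin n,
      bc.ι (x i - E.toFun (x i)) * bc.e * bc.ι (star (x i - E.toFun (x i)))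
        = bc.ι (x i) * bc.e * bc.ι (star (x i))
          - bc.ι (x i * E.toFun (star (x i))) * bc.e
          - bc.e * bc.ι (E.toFun (x i) * star (x i))
          + bc.ι (E.toFun (x i) * E.toFun (star (x i))) * bc.e := by
    intro i
    have hstar : star (x i - E.toFun (x i)) = star (x i) - E.toFun (star (x i)) := by
      rw [star_sub, ← E.star_map]
    rw [hstar, map_sub, map_sub]
    have c1 : bc.e * bc.ι (E.toFun (star (x i))) = bc.ι (E.toFun (star (x i))) * bc.e :=
      comm_e E bc (E.mem_range _)
    have c2 : bc.e * bc.ι (E.toFun (x i)) = bc.ι (E.toFun (x i)) * bc.e :=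
      comm_e E bc (E.mem_range _)
    have T2 : bc.ι (x i) * bc.e * bc.ι (E.toFun (star (x i)))
        = bc.ι (x i * E.toFun (star (x i))) * bc.e := by
      rw [mul_assoc, c1, ← mul_assoc, ← map_mul]
    have T3 : bc.ι (E.toFun (x i)) * bc.e * bc.ι (star (x i))
        = bc.e * bc.ι (E.toFun (x i) * star (x i)) := by
      rw [← c2, mul_assoc, ← map_mul]
    have T4 : bc.ι (E.toFun (x i)) * bc.e * bc.ι (E.toFun (star (x i)))
        = bc.ι (E.toFun (x i) * E.toFun (star (x i))) * bc.e := by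
      rw [mul_assoc, c1, ← mul_assoc, ← map_mul]
    calc (bc.ι (x i) - bc.ι (E.toFun (x i))) * bc.e
          * (bc.ι (star (x i)) - bc.ι (E.toFun (star (x i))))
        = bc.ι (x i) * bc.e * bc.ι (star (x i))
          - bc.ι (x i) * bc.e * bc.ι (E.toFun (star (x i)))
          - bc.ι (E.toFun (x i)) * bc.e * bc.ι (star (x i))
          + bc.ι (E.toFun (x i)) * bc.e * bc.ι (E.toFun (star (x i))) := by noncomm_ring
      _ = _ := by rw [T2, T3, T4]
  rw [Finset.sum_congr rfl fun i _ => hterm i]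
  simp only [Finset.sum_add_distrib, Finset.sum_sub_distrib]
  rw [p_one E bc x hx, ← Finset.sum_mul, ← Finset.mul_sum, ← Finset.sum_mul,
    ← map_sum, ← map_sum, ← map_sum, sum_x_Ex E x hx, sum_Ex_x E x hx, sum_ExEx E x hx,
    map_one, one_mul, mul_one]
  noncomm_ring

private lemma E_faithful (bc : BasicConstruction E C) (b : B)
    (h : E.toFun (star b * b) = 0) : b = 0 := by
  apply bc.mul_e_inj
  have h1 : star (bc.ι b * bc.e) * (bc.ι b * bc.e) = 0 := by
    rw [star_mul, bc.e_star, ← map_star]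
    calc bc.e * bc.ι (star b) * (bc.ι b * bc.e)
        = bc.e * bc.ι (star b * b) * bc.e := by rw [map_mul]; simp only [mul_assoc]
      _ = bc.ι (E.toFun (star b * b)) * bc.e := bc.jones _
      _ = 0 := by rw [h, map_zero, zero_mul]
  have h2 : ‖bc.ι b * bc.e‖ * ‖bc.ι b * bc.e‖ = 0 := by
    rw [← CStarRing.norm_star_mul_self, h1, norm_zero]
  rcases mul_self_eq_zero.mp h2 with h3
  exact norm_eq_zero.mp h3

section Et

variable (bc : BasicConstruction E C) (Et : C →ₗ[ℂ] B)
  (hEt : ∀ b c : B, Et (bc.ι b * bc.e * bc.ι c) = ((2 : ℂ))⁻¹ • (b * c))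

include hEt

private lemma Et_iota (hx : IsQuasiBasis E x) (hidx : ∑ i, x i * star (x i) = (2 : B)) (b : B) :
    Et (bc.ι b) = b := by
  have hexp : bc.ι b = ∑ i, bc.ι (b * x i) * bc.e * bc.ι (star (x i)) := by
    calc bc.ι b = bc.ι b * ∑ i, bc.ι (x i) * bc.e * bc.ι (star (x i)) := by
          rw [p_one E bc x hx, mul_one]
      _ = ∑ i, bc.ι (b * x i) * bc.e * bc.ι (star (x i)) := by
          rw [Finset.mul_sum]
          exact Finset.sum_congr rfl fun i _ => by rw [← mul_assoc, ← mul_assoc, ← map_mul]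
  rw [hexp, map_sum]
  have : ∀ i : Fin n, Et (bc.ι (b * x i) * bc.e * bc.ι (star (x i)))
      = (2 : ℂ)⁻¹ • (b * x i * star (x i)) := fun i => hEt _ _
  rw [Finset.sum_congr rfl fun i _ => this i, ← Finset.smul_sum]
  have hsum : ∑ i, b * x i * star (x i) = b * (2 : B) := by
    rw [Finset.sum_congr rfl fun (i : Fin n) _ => mul_assoc b (x i) (star (x i)),
      ← Finset.mul_sum, hidx]
  rw [hsum, mul_two, ← two_smul ℂ b, smul_smul, inv_mul_cancel₀ (two_ne_zero), one_smul]

private lemma Et_e_iota (hx : IsQuasiBasis E x) (b : B) :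
    Et (bc.e * bc.ι b) = (2 : ℂ)⁻¹ • b := by
  have hexp : bc.e * bc.ι b = ∑ i, bc.ι (E.toFun (b * x i)) * bc.e * bc.ι (star (x i)) := by
    calc bc.e * bc.ι b
        = bc.e * bc.ι b * ∑ i, bc.ι (x i) * bc.e * bc.ι (star (x i)) := by
          rw [p_one E bc x hx, mul_one]
      _ = ∑ i, bc.ι (E.toFun (b * x i)) * bc.e * bc.ι (star (x i)) := by
          rw [Finset.mul_sum]
          refine Finset.sum_congr rfl fun i _ => ?_
          calc bc.e * bc.ι b * (bc.ι (x i) * bc.e * bc.ι (star (x i)))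
              = (bc.e * bc.ι (b * x i) * bc.e) * bc.ι (star (x i)) := by
                rw [map_mul]; simp only [mul_assoc]
            _ = bc.ι (E.toFun (b * x i)) * bc.e * bc.ι (star (x i)) := by rw [bc.jones]
  rw [hexp, map_sum]
  rw [Finset.sum_congr rfl fun i _ => hEt (E.toFun (b * x i)) (star (x i)), ← Finset.smul_sum,
    hx.2 b]

private lemma Et_iota_e (b : B) : Et (bc.ι b * bc.e) = (2 : ℂ)⁻¹ • b := by
  have := hEt b 1
  rw [map_one, mul_one, mul_one] at this
  exact this

private lemma key_zero (hx : IsQuasiBasis E x) (hidx : ∑ i, x i * star (x i) = (2 : B))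
    (k : B) (hk : E.toFun k = 0) :
    ∑ i, ∑ j, (x i - E.toFun (x i))
        * E.toFun (star (x i - E.toFun (x i)) * (k * (x j - E.toFun (x j))))
        * star (x j - E.toFun (x j)) = 0 := by
  have he : bc.e * bc.ι k * bc.e = 0 := by rw [bc.jones, hk, map_zero, zero_mul]
  have hA : (1 - bc.e) * bc.ι k * (1 - bc.e)
      = bc.ι k - bc.e * bc.ι k - bc.ι k * bc.e := by
    have expand : (1 - bc.e) * bc.ι k * (1 - bc.e)
        = bc.ι k - bc.e * bc.ι k - bc.ι k * bc.e + bc.e * bc.ι k * bc.e := by noncomm_ring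
    rw [expand, he, add_zero]
  have hB : Et ((1 - bc.e) * bc.ι k * (1 - bc.e)) = 0 := by
    rw [hA, map_sub, map_sub, Et_iota E x bc Et hEt hx hidx, Et_e_iota E x bc Et hEt hx,
      Et_iota_e E bc Et hEt]
    have : (2 : ℂ)⁻¹ • k + (2 : ℂ)⁻¹ • k = k := by
      rw [← add_smul]
      norm_num
    rw [sub_sub, this, sub_self]
  have hterm : ∀ i j : Fin n,
      bc.ι (x i - E.toFun (x i)) * bc.e * bc.ι (star (x i - E.toFun (x i))) * bc.ι k
          * (bc.ι (x j - E.toFun (x j)) * bc.e * bc.ι (star (x j - E.toFun (x j))))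
        = bc.ι ((x i - E.toFun (x i))
              * E.toFun (star (x i - E.toFun (x i)) * (k * (x j - E.toFun (x j)))))
            * bc.e * bc.ι (star (x j - E.toFun (x j))) := by
    intro i j
    simp only [mul_assoc]
    rw [hiota E bc (star (x i - E.toFun (x i))) k,
      hiota E bc (star (x i - E.toFun (x i)) * k) (x j - E.toFun (x j)),
      mul_assoc (star (x i - E.toFun (x i))) k (x j - E.toFun (x j)),
      hj E bc, hiota E bc]
  have hC : (1 - bc.e) * bc.ι k * (1 - bc.e)
      = ∑ i, ∑ j, bc.ι ((x i - E.toFun (x i))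
            * E.toFun (star (x i - E.toFun (x i)) * (k * (x j - E.toFun (x j)))))
          * bc.e * bc.ι (star (x j - E.toFun (x j))) := by
    rw [g_decomp E x bc hx hidx, Finset.sum_mul, Finset.sum_mul_sum]
    exact Finset.sum_congr rfl fun i _ => Finset.sum_congr rfl fun j _ => hterm i j
  have hD : Et ((1 - bc.e) * bc.ι k * (1 - bc.e))
      = (2 : ℂ)⁻¹ • ∑ i, ∑ j, (x i - E.toFun (x i))
          * E.toFun (star (x i - E.toFun (x i)) * (k * (x j - E.toFun (x j))))
          * star (x j - E.toFun (x j)) := by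
    rw [hC, map_sum]
    rw [Finset.sum_congr rfl fun i _ => map_sum Et _ _]
    rw [Finset.sum_congr rfl fun (i : Fin n) _ => Finset.sum_congr rfl
      fun (j : Fin n) _ => hEt _ _]
    rw [Finset.sum_congr rfl fun (i : Fin n) _ => (Finset.smul_sum (r := (2 : ℂ)⁻¹)).symm,
      ← Finset.smul_sum]
  rw [hB] at hD
  rcases (smul_eq_zero.mp hD.symm) with h | h
  · exact absurd h (by norm_num)
  · exact h

private lemma core (hx : IsQuasiBasis E x) (hidx : ∑ i, x i * star (x i) = (2 : B))
    (z z' : B) (hz : E.toFun z = 0) (hz' : E.toFun z' = 0) :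
    E.toFun (star z * z') = star z * z'
      + ∑ j, (star z * (x j - E.toFun (x j)) - E.toFun (star z * (x j - E.toFun (x j))))
          * star (star z' * (x j - E.toFun (x j)) - E.toFun (star z' * (x j - E.toFun (x j)))) := by
  have hkz : E.toFun (star z) = 0 := by rw [E.star_map, hz, star_zero]
  have h0 := key_zero E x bc Et hEt hx hidx (star z) hkz
  rw [Finset.sum_comm] at h0
  have h1 : ∑ j, (star z * (x j - E.toFun (x j)) - E.toFun (star z * (x j - E.toFun (x j))))
      * star (x j - E.toFun (x j)) = 0 := by
    rw [← h0]
    refine Finset.sum_congr rfl fun j _ => ?_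
    rw [← Finset.sum_mul, P_exp1 E x hx (star z * (x j - E.toFun (x j)))]
  have h2 : ∑ j, (star z * (x j - E.toFun (x j)) - E.toFun (star z * (x j - E.toFun (x j))))
      * (star (x j - E.toFun (x j)) * z') = 0 := by
    have := congrArg (· * z') h1
    simp only [zero_mul] at this
    rw [← this, Finset.sum_mul]
    exact Finset.sum_congr rfl fun j _ => (mul_assoc _ _ _).symm
  have hq'star : ∀ j : Fin n,
      star (star z' * (x j - E.toFun (x j)) - E.toFun (star z' * (x j - E.toFun (x j))))
        = star (x j - E.toFun (x j)) * z'
          - E.toFun (star (x j - E.toFun (x j)) * z') := by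
    intro j
    rw [star_sub, star_mul, star_star, ← E.star_map, star_mul, star_star]
  have hsplit : ∀ j : Fin n,
      (star z * (x j - E.toFun (x j)) - E.toFun (star z * (x j - E.toFun (x j))))
          * (star (x j - E.toFun (x j)) * z')
        = (star z * (x j - E.toFun (x j)) - E.toFun (star z * (x j - E.toFun (x j))))
            * E.toFun (star (x j - E.toFun (x j)) * z')
          + (star z * (x j - E.toFun (x j)) - E.toFun (star z * (x j - E.toFun (x j))))
            * star (star z' * (x j - E.toFun (x j))
                - E.toFun (star z' * (x j - E.toFun (x j)))) := by
    intro j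
    rw [hq'star j]
    noncomm_ring
  rw [Finset.sum_congr rfl fun j _ => hsplit j, Finset.sum_add_distrib] at h2
  have hfirst : ∑ j, (star z * (x j - E.toFun (x j)) - E.toFun (star z * (x j - E.toFun (x j))))
      * E.toFun (star (x j - E.toFun (x j)) * z')
        = star z * z' - E.toFun (star z * z') := by
    have hexp : ∀ j : Fin n,
        (star z * (x j - E.toFun (x j)) - E.toFun (star z * (x j - E.toFun (x j))))
            * E.toFun (star (x j - E.toFun (x j)) * z')
          = star z * ((x j - E.toFun (x j)) * E.toFun (star (x j - E.toFun (x j)) * z'))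
            - E.toFun (star z * ((x j - E.toFun (x j))
                * E.toFun (star (x j - E.toFun (x j)) * z'))) := by
      intro j
      rw [sub_mul, mul_assoc]
      congr 1
      rw [← mul_assoc, E.right_mod _ (E.mem_range _)]
    rw [Finset.sum_congr rfl fun j _ => hexp j, Finset.sum_sub_distrib, ← Finset.mul_sum,
      ← map_sum, ← Finset.mul_sum, P_exp1 E x hx z', hz', sub_zero]
  rw [hfirst] at h2
  refine (sub_eq_zero.mp ?_).symm
  rw [← h2]
  noncomm_ring

private lemma q_zero (hx : IsQuasiBasis E x) (hidx : ∑ i, x i * star (x i) = (2 : B))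
    (z : B) (hz : E.toFun z = 0) (j : Fin n) :
    star z * (x j - E.toFun (x j)) - E.toFun (star z * (x j - E.toFun (x j))) = 0 := by
  have hcore := core E x bc Et hEt hx hidx z z hz hz
  have hEsum : ∑ j, E.toFun
      ((star z * (x j - E.toFun (x j)) - E.toFun (star z * (x j - E.toFun (x j))))
        * star (star z * (x j - E.toFun (x j)) - E.toFun (star z * (x j - E.toFun (x j)))))
      = 0 := by
    have h := congrArg E.toFun hcore
    rw [E_idem, map_add, map_sum] at h
    exact left_eq_add.mp h
  letI := CStarAlgebra.spectralOrder B
  haveI := CStarAlgebra.spectralOrderedRing B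
  have hnn : ∀ i ∈ Finset.univ, (0 : B) ≤ E.toFun
      ((star z * (x i - E.toFun (x i)) - E.toFun (star z * (x i - E.toFun (x i))))
        * star (star z * (x i - E.toFun (x i)) - E.toFun (star z * (x i - E.toFun (x i))))) := by
    intro i _
    obtain ⟨d, hd⟩ := E.pos (star (star z * (x i - E.toFun (x i))
      - E.toFun (star z * (x i - E.toFun (x i)))))
    rw [star_star] at hd
    rw [hd]
    exact star_mul_self_nonneg d
  have hzero := (Finset.sum_eq_zero_iff_of_nonneg hnn).mp hEsum j (Finset.mem_univ j)
  have hstar0 : star (star z * (x j - E.toFun (x j))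
      - E.toFun (star z * (x j - E.toFun (x j)))) = 0 := by
    refine E_faithful E bc _ ?_
    rwa [star_star]
  exact star_eq_zero.mp hstar0

private lemma EK_mul (hx : IsQuasiBasis E x) (hidx : ∑ i, x i * star (x i) = (2 : B))
    (z z' : B) (hz : E.toFun z = 0) (hz' : E.toFun z' = 0) :
    E.toFun (star z * z') = star z * z' := by
  have hcore := core E x bc Et hEt hx hidx z z' hz hz'
  have hzero : ∀ j ∈ Finset.univ, (star z * (x j - E.toFun (x j))
      - E.toFun (star z * (x j - E.toFun (x j))))
      * star (star z' * (x j - E.toFun (x j)) - E.toFun (star z' * (x j - E.toFun (x j)))) =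
        (0 : B) := by
    intro j _
    rw [q_zero E x bc Et hEt hx hidx z hz j, zero_mul]
  rw [Finset.sum_eq_zero hzero, add_zero] at hcore
  exact hcore

private lemma K_mulgen (hx : IsQuasiBasis E x) (hidx : ∑ i, x i * star (x i) = (2 : B))
    (w w' : B) (hw : E.toFun w = 0) (hw' : E.toFun w' = 0) :
    E.toFun (w * w') = w * w' := by
  have hsw : E.toFun (star w) = 0 := by rw [E.star_map, hw, star_zero]
  have := EK_mul E x bc Et hEt hx hidx (star w) w' hsw hw'
  rwa [star_star] at this

omit hEt in
private lemma E_yi (i : Fin n) : E.toFun (x i - E.toFun (x i)) = 0 := E_P E _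

omit hEt in
private lemma one_sub_e_idem : ((1 : C) - bc.e) * (1 - bc.e) = 1 - bc.e := by
  calc (1 - bc.e) * (1 - bc.e) = 1 - bc.e - bc.e + bc.e * bc.e := by noncomm_ring
  _ = 1 - bc.e := by rw [bc.e_idem]; noncomm_ring

omit hEt in
private lemma e_mul_one_sub_e : bc.e * ((1 : C) - bc.e) = 0 := by
  rw [mul_sub, mul_one, bc.e_idem, sub_self]

omit hEt in
private lemma comm_one_sub_e {a : B} (ha : a ∈ A) :
    (1 - bc.e) * bc.ι a = bc.ι a * (1 - bc.e) := by
  calc (1 - bc.e) * bc.ι a = bc.ι a - bc.e * bc.ι a := by noncomm_ring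
  _ = bc.ι a - bc.ι a * bc.e := by rw [comm_e E bc ha]
  _ = bc.ι a * (1 - bc.e) := by noncomm_ring

private lemma corner_id (hx : IsQuasiBasis E x) (hidx : ∑ i, x i * star (x i) = (2 : B))
    (b : B) :
    (1 - bc.e) * bc.ι b * (1 - bc.e) = bc.ι (E.toFun b) * (1 - bc.e) := by
  have hk : E.toFun (b - E.toFun b) = 0 := E_P E b
  have hkzero : (1 - bc.e) * bc.ι (b - E.toFun b) * (1 - bc.e) = 0 := by
    have hterm : ∀ i j : Fin n,
        bc.ι (x i - E.toFun (x i)) * bc.e * bc.ι (star (x i - E.toFun (x i)))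
            * bc.ι (b - E.toFun b)
            * (bc.ι (x j - E.toFun (x j)) * bc.e * bc.ι (star (x j - E.toFun (x j))))
          = 0 := by
      intro i j
      have hmem : (b - E.toFun b) * (x j - E.toFun (x j)) ∈ A := by
        have := K_mulgen E x bc Et hEt hx hidx (b - E.toFun b) (x j - E.toFun (x j))
          hk (E_yi E x j)
        rw [← this]
        exact E.mem_range _
      have hE0 : E.toFun (star (x i - E.toFun (x i))
          * ((b - E.toFun b) * (x j - E.toFun (x j)))) = 0 := by
        rw [E.right_mod _ hmem, E.star_map, E_yi E x i, star_zero, zero_mul]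
      simp only [mul_assoc]
      rw [hiota E bc (star (x i - E.toFun (x i))) (b - E.toFun b),
        hiota E bc (star (x i - E.toFun (x i)) * (b - E.toFun b)) (x j - E.toFun (x j)),
        mul_assoc (star (x i - E.toFun (x i))) (b - E.toFun b) (x j - E.toFun (x j)),
        hj E bc, hE0, map_zero, zero_mul, mul_zero]
    rw [g_decomp E x bc hx hidx, Finset.sum_mul, Finset.sum_mul_sum]
    rw [Finset.sum_congr rfl fun i _ => Finset.sum_congr rfl fun j _ => hterm i j]
    simp
  have hmain : (1 - bc.e) * bc.ι b * (1 - bc.e)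
      = (1 - bc.e) * bc.ι (E.toFun b) * (1 - bc.e)
        + (1 - bc.e) * bc.ι (b - E.toFun b) * (1 - bc.e) := by
    have : bc.ι b = bc.ι (E.toFun b) + bc.ι (b - E.toFun b) := by
      rw [← map_add]
      congr 1
      noncomm_ring
    rw [this]
    noncomm_ring
  rw [hmain, hkzero, add_zero, comm_one_sub_e E bc (E.mem_range b), mul_assoc,
    one_sub_e_idem E bc]

private lemma e_iota_k (hx : IsQuasiBasis E x) (hidx : ∑ i, x i * star (x i) = (2 : B))
    (k : B) (hk : E.toFun k = 0) :
    bc.e * bc.ι k = bc.ι k * (1 - bc.e) := by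
  have h4 : bc.ι k = bc.e * bc.ι k * bc.e + bc.e * bc.ι k * (1 - bc.e)
      + (1 - bc.e) * bc.ι k * bc.e + (1 - bc.e) * bc.ι k * (1 - bc.e) := by
    noncomm_ring
  have h1 : bc.e * bc.ι k * bc.e = 0 := by rw [bc.jones, hk, map_zero, zero_mul]
  have h2 : (1 - bc.e) * bc.ι k * (1 - bc.e) = 0 := by
    rw [corner_id E x bc Et hEt hx hidx k, hk, map_zero, zero_mul]
  rw [h1, h2, zero_add, add_zero] at h4
  have hX : bc.e * (bc.e * bc.ι k * (1 - bc.e)) = bc.e * bc.ι k * (1 - bc.e) := by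
    calc bc.e * (bc.e * bc.ι k * (1 - bc.e)) = (bc.e * bc.e) * (bc.ι k * (1 - bc.e)) := by
          simp only [mul_assoc]
      _ = bc.e * bc.ι k * (1 - bc.e) := by rw [bc.e_idem]; simp only [mul_assoc]
  have hY : bc.e * ((1 - bc.e) * bc.ι k * bc.e) = 0 := by
    calc bc.e * ((1 - bc.e) * bc.ι k * bc.e) = (bc.e * (1 - bc.e)) * (bc.ι k * bc.e) := by
          simp only [mul_assoc]
      _ = 0 := by rw [e_mul_one_sub_e E bc, zero_mul]
  have hX2 : (bc.e * bc.ι k * (1 - bc.e)) * (1 - bc.e) = bc.e * bc.ι k * (1 - bc.e) := by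
    rw [mul_assoc (bc.e * bc.ι k), one_sub_e_idem E bc]
  have hY2 : ((1 - bc.e) * bc.ι k * bc.e) * (1 - bc.e) = 0 := by
    rw [mul_assoc ((1 - bc.e) * bc.ι k), e_mul_one_sub_e E bc, mul_zero]
  calc bc.e * bc.ι k
      = bc.e * (bc.e * bc.ι k * (1 - bc.e) + (1 - bc.e) * bc.ι k * bc.e) := by rw [← h4]
    _ = bc.e * bc.ι k * (1 - bc.e) := by rw [mul_add, hX, hY, add_zero]
    _ = (bc.e * bc.ι k * (1 - bc.e) + (1 - bc.e) * bc.ι k * bc.e) * (1 - bc.e) := by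
        rw [add_mul, hX2, hY2, add_zero]
    _ = bc.ι k * (1 - bc.e) := by rw [← h4]

private lemma E_star_mul_self (hx : IsQuasiBasis E x)
    (hidx : ∑ i, x i * star (x i) = (2 : B)) (b : B) :
    E.toFun (star b * b)
      = star (E.toFun b) * E.toFun b + star (b - E.toFun b) * (b - E.toFun b) := by
  have hk : E.toFun (b - E.toFun b) = 0 := E_P E b
  have hks : E.toFun (star (b - E.toFun b)) = 0 := by rw [E.star_map, hk, star_zero]
  have hsplit : star b * b = star (E.toFun b) * b + star (b - E.toFun b) * b := by
    rw [star_sub]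
    noncomm_ring
  have h1 : E.toFun (star (E.toFun b) * b) = star (E.toFun b) * E.toFun b := by
    rw [E.left_mod _ (star_mem (E.mem_range b))]
  have hsplit2 : star (b - E.toFun b) * b
      = star (b - E.toFun b) * E.toFun b + star (b - E.toFun b) * (b - E.toFun b) := by
    noncomm_ring
  have h2 : E.toFun (star (b - E.toFun b) * b)
      = star (b - E.toFun b) * (b - E.toFun b) := by
    rw [hsplit2, map_add, E.right_mod _ (E.mem_range b), hks, zero_mul, zero_add,
      K_mulgen E x bc Et hEt hx hidx _ _ hks hk]
  rw [hsplit, map_add, h1, h2]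

private lemma pp_le (hx : IsQuasiBasis E x) (hidx : ∑ i, x i * star (x i) = (2 : B)) (b : B) :
    E.toFun (star b * b) + E.toFun (star b * b)
      = star b * b
        + star (E.toFun b - (b - E.toFun b)) * (E.toFun b - (b - E.toFun b)) := by
  rw [E_star_mul_self E x bc Et hEt hx hidx b]
  have hb : b = E.toFun b + (b - E.toFun b) := by noncomm_ring
  generalize hs : E.toFun b = s at *
  generalize hkk : b - s = k at *
  rw [hb]
  simp only [star_add, star_sub]
  noncomm_ring

private lemma norm_sq_le (hx : IsQuasiBasis E x) (hidx : ∑ i, x i * star (x i) = (2 : B))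
    (b : B) : ‖b‖ * ‖b‖ ≤ 2 * ‖E.toFun (star b * b)‖ := by
  letI := CStarAlgebra.spectralOrder B
  haveI := CStarAlgebra.spectralOrderedRing B
  have h1 : star b * b ≤ E.toFun (star b * b) + E.toFun (star b * b) := by
    rw [pp_le E x bc Et hEt hx hidx b]
    exact le_add_of_nonneg_right (star_mul_self_nonneg _)
  have h2 : ‖star b * b‖ ≤ ‖E.toFun (star b * b) + E.toFun (star b * b)‖ :=
    CStarAlgebra.norm_le_norm_of_nonneg_of_le (star_mul_self_nonneg b) h1
  have h3 : ‖E.toFun (star b * b) + E.toFun (star b * b)‖ ≤ 2 * ‖E.toFun (star b * b)‖ := by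
    calc ‖E.toFun (star b * b) + E.toFun (star b * b)‖
        ≤ ‖E.toFun (star b * b)‖ + ‖E.toFun (star b * b)‖ := norm_add_le _ _
      _ = 2 * ‖E.toFun (star b * b)‖ := by ring
  calc ‖b‖ * ‖b‖ = ‖star b * b‖ := (CStarRing.norm_star_mul_self).symm
    _ ≤ 2 * ‖E.toFun (star b * b)‖ := le_trans h2 h3

private lemma E_norm_le (hx : IsQuasiBasis E x) (hidx : ∑ i, x i * star (x i) = (2 : B))
    (b : B) : ‖E.toFun b‖ ≤ ‖b‖ := by
  letI := CStarAlgebra.spectralOrder B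
  haveI := CStarAlgebra.spectralOrderedRing B
  have hEpos : ∀ p ∈ AddSubmonoid.closure (Set.range fun s : B => star s * s),
      (0 : B) ≤ E.toFun p := by
    intro p hp
    induction hp using AddSubmonoid.closure_induction with
    | mem q hq =>
      obtain ⟨c, rfl⟩ := hq
      obtain ⟨d, hd⟩ := E.pos c
      rw [hd]
      exact star_mul_self_nonneg d
    | zero => rw [map_zero]
    | add q r _ _ hq hr =>
      rw [map_add]
      exact add_nonneg hq hr
  have hmono : ∀ v w : B, v ≤ w → E.toFun v ≤ E.toFun w := by
    intro v w hvw
    rw [← sub_nonneg] at hvw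
    rw [StarOrderedRing.nonneg_iff] at hvw
    have := hEpos (w - v) hvw
    rw [map_sub, sub_nonneg] at this
    exact this
  have hnorm1 : ‖(1 : B)‖ ≤ 1 := by
    have h := CStarRing.norm_star_mul_self (x := (1 : B))
    rw [star_one, one_mul] at h
    nlinarith [norm_nonneg (1 : B)]
  have s1 : star (E.toFun b) * E.toFun b ≤ E.toFun (star b * b) := by
    rw [E_star_mul_self E x bc Et hEt hx hidx b]
    exact le_add_of_nonneg_right (star_mul_self_nonneg _)
  have s2 : star b * b ≤ algebraMap ℝ B ‖star b * b‖ :=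
    IsSelfAdjoint.le_algebraMap_norm_self (IsSelfAdjoint.star_mul_self b)
  have hEalg : E.toFun (algebraMap ℝ B ‖star b * b‖) = algebraMap ℝ B ‖star b * b‖ := by
    rw [Algebra.algebraMap_eq_smul_one]
    have hcoe : (‖star b * b‖ : ℝ) • (1 : B) = ((‖star b * b‖ : ℂ)) • (1 : B) := by
      simp [Complex.coe_smul]
    rw [hcoe, map_smul, E_one E]
  have s3 : E.toFun (star b * b) ≤ algebraMap ℝ B ‖star b * b‖ := by
    have := hmono _ _ s2
    rwa [hEalg] at this
  have s4 : ‖star (E.toFun b) * E.toFun b‖ ≤ ‖algebraMap ℝ B ‖star b * b‖‖ :=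
    CStarAlgebra.norm_le_norm_of_nonneg_of_le (star_mul_self_nonneg _) (le_trans s1 s3)
  have s5 : ‖algebraMap ℝ B ‖star b * b‖‖ ≤ ‖star b * b‖ := by
    rw [Algebra.algebraMap_eq_smul_one, norm_smul]
    calc ‖(‖star b * b‖ : ℝ)‖ * ‖(1 : B)‖ ≤ ‖star b * b‖ * 1 := by
          apply mul_le_mul
          · rw [Real.norm_eq_abs, abs_of_nonneg (norm_nonneg _)]
          · exact hnorm1
          · exact norm_nonneg _
          · exact norm_nonneg _
      _ = ‖star b * b‖ := mul_one _
  have s6 : ‖E.toFun b‖ * ‖E.toFun b‖ ≤ ‖b‖ * ‖b‖ := by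
    calc ‖E.toFun b‖ * ‖E.toFun b‖ = ‖star (E.toFun b) * E.toFun b‖ :=
          (CStarRing.norm_star_mul_self).symm
      _ ≤ ‖star b * b‖ := le_trans s4 s5
      _ = ‖b‖ * ‖b‖ := CStarRing.norm_star_mul_self
  nlinarith [norm_nonneg (E.toFun b), norm_nonneg b]

private lemma A_isClosed (hx : IsQuasiBasis E x) (hidx : ∑ i, x i * star (x i) = (2 : B)) :
    IsClosed (A : Set B) := by
  have hset : (A : Set B) = {b : B | E.toFun b = b} := by
    ext b
    constructor
    · exact fun hb => E.fixes b hb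
    · intro hb
      have := E.mem_range b
      rwa [hb] at this
  rw [hset]
  have hcont : Continuous E.toFun :=
    (LinearMap.mkContinuous E.toFun 1 fun b => by
      rw [one_mul]; exact E_norm_le E x bc Et hEt hx hidx b).continuous
  exact isClosed_eq hcont continuous_id

private lemma norm_iota_e (hx : IsQuasiBasis E x)
    (hidx : ∑ i, x i * star (x i) = (2 : B)) {a : B} (ha : a ∈ A) :
    ‖bc.ι a * bc.e‖ = ‖a‖ := by
  haveI hAc : IsClosed (A : Set B) := A_isClosed E x bc Et hEt hx hidx
  let φ : A →⋆ₙₐ[ℂ] C :=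
  { toFun := fun a : A => bc.ι (a : B) * bc.e
    map_smul' := fun c a => by
      show bc.ι ((c • a : A) : B) * bc.e = c • (bc.ι (a : B) * bc.e)
      rw [SetLike.val_smul, map_smul, smul_mul_assoc]
    map_zero' := by simp
    map_add' := fun a b => by
      show bc.ι (((a + b : A)) : B) * bc.e = bc.ι (a : B) * bc.e + bc.ι (b : B) * bc.e
      rw [AddMemClass.coe_add, map_add, add_mul]
    map_mul' := fun a b => by
      show bc.ι ((a : B) * (b : B)) * bc.e = (bc.ι a * bc.e) * (bc.ι b * bc.e)
      calc bc.ι ((a : B) * (b : B)) * bc.e = bc.ι (a : B) * (bc.ι (b : B) * (bc.e * bc.e)) := by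
            rw [map_mul, bc.e_idem]
            simp only [mul_assoc]
        _ = bc.ι (a : B) * ((bc.e * bc.ι (b : B)) * bc.e) := by
            rw [comm_e E bc b.2]
            simp only [mul_assoc]
        _ = (bc.ι a * bc.e) * (bc.ι b * bc.e) := by simp only [mul_assoc]
    map_star' := fun a => by
      show bc.ι (star (a : B)) * bc.e = star (bc.ι (a : B) * bc.e)
      rw [star_mul, bc.e_star, ← map_star, comm_e E bc (star_mem a.2)] }
  have hφinj : Function.Injective φ := by
    intro u v huv
    have h0 : bc.ι ((u : B) - (v : B)) * bc.e = 0 := by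
      rw [map_sub, sub_mul]
      have : φ u = φ v := huv
      simp only [φ, NonUnitalStarAlgHom.coe_mk] at this
      rw [show bc.ι (u : B) * bc.e = bc.ι (v : B) * bc.e from this, sub_self]
    exact Subtype.ext (sub_eq_zero.mp (bc.mul_e_inj _ h0))
  exact NonUnitalStarAlgHom.norm_map φ hφinj ⟨a, ha⟩

private lemma iota_g_inj (hx : IsQuasiBasis E x)
    (hidx : ∑ i, x i * star (x i) = (2 : B)) (b : B)
    (h : bc.ι b * (1 - bc.e) = 0) : b = 0 := by
  have h1 : bc.ι b = bc.ι b * bc.e := by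
    rw [mul_sub, mul_one, sub_eq_zero] at h
    exact h
  have h2 : ∀ i : Fin n, b * (x i - E.toFun (x i)) = 0 := by
    intro i
    apply bc.mul_e_inj
    calc bc.ι (b * (x i - E.toFun (x i))) * bc.e
        = bc.ι b * (bc.ι (x i - E.toFun (x i)) * bc.e) := by rw [map_mul, mul_assoc]
      _ = (bc.ι b * bc.e) * (bc.ι (x i - E.toFun (x i)) * bc.e) := by rw [← h1]
      _ = bc.ι b * (bc.e * bc.ι (x i - E.toFun (x i)) * bc.e) := by simp only [mul_assoc]
      _ = 0 := by rw [bc.jones, E_yi E x i, map_zero, zero_mul, mul_zero]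
  have h3 : b = b * ∑ i, (x i - E.toFun (x i)) * star (x i - E.toFun (x i)) := by
    rw [sum_yy E x hx hidx, mul_one]
  rw [h3, Finset.mul_sum]
  refine Finset.sum_eq_zero fun i _ => ?_
  rw [← mul_assoc, h2 i, zero_mul]

private lemma norm_iota_g (hx : IsQuasiBasis E x)
    (hidx : ∑ i, x i * star (x i) = (2 : B)) {a : B} (ha : a ∈ A) :
    ‖bc.ι a * (1 - bc.e)‖ = ‖a‖ := by
  haveI hAc : IsClosed (A : Set B) := A_isClosed E x bc Et hEt hx hidx
  have hgstar : star ((1 : C) - bc.e) = 1 - bc.e := by rw [star_sub, star_one, bc.e_star]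
  let φ : A →⋆ₙₐ[ℂ] C :=
  { toFun := fun a : A => bc.ι (a : B) * (1 - bc.e)
    map_smul' := fun c a => by
      show bc.ι ((c • a : A) : B) * (1 - bc.e) = c • (bc.ι (a : B) * (1 - bc.e))
      rw [SetLike.val_smul, map_smul, smul_mul_assoc]
    map_zero' := by simp
    map_add' := fun a b => by
      show bc.ι (((a + b : A)) : B) * (1 - bc.e)
        = bc.ι (a : B) * (1 - bc.e) + bc.ι (b : B) * (1 - bc.e)
      rw [AddMemClass.coe_add, map_add, add_mul]
    map_mul' := fun a b => by
      show bc.ι ((a : B) * (b : B)) * (1 - bc.e)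
        = (bc.ι a * (1 - bc.e)) * (bc.ι b * (1 - bc.e))
      calc bc.ι ((a : B) * (b : B)) * (1 - bc.e)
          = bc.ι (a : B) * (bc.ι (b : B) * ((1 - bc.e) * (1 - bc.e))) := by
            rw [map_mul, one_sub_e_idem E bc]
            simp only [mul_assoc]
        _ = bc.ι (a : B) * (((1 - bc.e) * bc.ι (b : B)) * (1 - bc.e)) := by
            rw [comm_one_sub_e E bc b.2]
            simp only [mul_assoc]
        _ = (bc.ι a * (1 - bc.e)) * (bc.ι b * (1 - bc.e)) := by simp only [mul_assoc]
    map_star' := fun a => by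
      show bc.ι (star (a : B)) * (1 - bc.e) = star (bc.ι (a : B) * (1 - bc.e))
      rw [star_mul, hgstar, ← map_star, comm_one_sub_e E bc (star_mem a.2)] }
  have hφinj : Function.Injective φ := by
    intro u v huv
    have h0 : bc.ι ((u : B) - (v : B)) * (1 - bc.e) = 0 := by
      rw [map_sub, sub_mul]
      have : φ u = φ v := huv
      simp only [φ, NonUnitalStarAlgHom.coe_mk] at this
      rw [show bc.ι (u : B) * (1 - bc.e) = bc.ι (v : B) * (1 - bc.e) from this, sub_self]
    exact Subtype.ext (sub_eq_zero.mp (iota_g_inj E x bc Et hEt hx hidx _ h0))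
  exact NonUnitalStarAlgHom.norm_map φ hφinj ⟨a, ha⟩

private lemma norm_corner_e (hx : IsQuasiBasis E x)
    (hidx : ∑ i, x i * star (x i) = (2 : B)) (b : B) :
    ‖b‖ ≤ 2 * ‖bc.ι b * bc.e‖ := by
  have hstar : star (bc.ι b * bc.e) * (bc.ι b * bc.e)
      = bc.ι (E.toFun (star b * b)) * bc.e := by
    rw [star_mul, bc.e_star, ← map_star]
    calc bc.e * bc.ι (star b) * (bc.ι b * bc.e)
        = bc.e * bc.ι (star b * b) * bc.e := by rw [map_mul]; simp only [mul_assoc]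
      _ = _ := bc.jones _
  have h1 : ‖bc.ι b * bc.e‖ * ‖bc.ι b * bc.e‖ = ‖E.toFun (star b * b)‖ := by
    rw [← CStarRing.norm_star_mul_self, hstar,
      norm_iota_e E x bc Et hEt hx hidx (E.mem_range _)]
  have h2 := norm_sq_le E x bc Et hEt hx hidx b
  rw [← h1] at h2
  nlinarith [norm_nonneg b, norm_nonneg (bc.ι b * bc.e)]

private lemma norm_corner_g (hx : IsQuasiBasis E x)
    (hidx : ∑ i, x i * star (x i) = (2 : B)) (b : B) :
    ‖b‖ ≤ 2 * ‖bc.ι b * (1 - bc.e)‖ := by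
  have hgstar : star ((1 : C) - bc.e) = 1 - bc.e := by rw [star_sub, star_one, bc.e_star]
  have hstar : star (bc.ι b * (1 - bc.e)) * (bc.ι b * (1 - bc.e))
      = bc.ι (E.toFun (star b * b)) * (1 - bc.e) := by
    rw [star_mul, hgstar, ← map_star]
    calc (1 - bc.e) * bc.ι (star b) * (bc.ι b * (1 - bc.e))
        = (1 - bc.e) * bc.ι (star b * b) * (1 - bc.e) := by
          rw [map_mul]; simp only [mul_assoc]
      _ = _ := corner_id E x bc Et hEt hx hidx _
  have h1 : ‖bc.ι b * (1 - bc.e)‖ * ‖bc.ι b * (1 - bc.e)‖ = ‖E.toFun (star b * b)‖ := by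
    rw [← CStarRing.norm_star_mul_self, hstar,
      norm_iota_g E x bc Et hEt hx hidx (E.mem_range _)]
  have h2 := norm_sq_le E x bc Et hEt hx hidx b
  rw [← h1] at h2
  nlinarith [norm_nonneg b, norm_nonneg (bc.ι b * (1 - bc.e))]

omit hEt in
private lemma proj_norm_le_one (p : C) (hps : star p = p) (hpi : p * p = p) : ‖p‖ ≤ 1 := by
  have h := CStarRing.norm_star_mul_self (x := p)
  rw [hps, hpi] at h
  nlinarith [norm_nonneg p]

omit hEt in
private lemma cauchy_of_bound {u : ℕ → C} {w : ℕ → B} (hu : CauchySeq u)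
    (hb : ∀ m k : ℕ, ‖w m - w k‖ ≤ 2 * ‖u m - u k‖) : CauchySeq w := by
  rw [Metric.cauchySeq_iff] at hu ⊢
  intro ε hε
  obtain ⟨N, hN⟩ := hu (ε / 4) (by linarith)
  refine ⟨N, fun m hm k hk => ?_⟩
  have h1 := hb m k
  have h2 := hN m hm k hk
  rw [dist_eq_norm] at h2 ⊢
  linarith

private lemma M_all (hx : IsQuasiBasis E x) (hidx : ∑ i, x i * star (x i) = (2 : B)) :
    ∀ z : C, ∃ b₁ b₂ : B, z = bc.ι b₁ * bc.e + bc.ι b₂ * (1 - bc.e) := by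
  have hnormι : ∀ b : B, ‖bc.ι b‖ = ‖b‖ := fun b =>
    NonUnitalStarAlgHom.norm_map bc.ι bc.inj b
  have hiotacont : Continuous bc.ι :=
    (AddMonoidHomClass.isometry_of_norm bc.ι hnormι).continuous
  have hge : ((1 : C) - bc.e) * bc.e = 0 := by rw [sub_mul, one_mul, bc.e_idem, sub_self]
  have heg : bc.e * ((1 : C) - bc.e) = 0 := e_mul_one_sub_e E bc
  let S : Set C := {z | ∃ b₁ b₂ : B, z = bc.ι b₁ * bc.e + bc.ι b₂ * (1 - bc.e)}
  let Mset : Submodule ℂ C :=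
  { carrier := S
    add_mem' := by
      rintro a b ⟨a1, a2, rfl⟩ ⟨b1, b2, rfl⟩
      exact ⟨a1 + b1, a2 + b2, by rw [map_add, map_add]; noncomm_ring⟩
    zero_mem' := ⟨0, 0, by simp⟩
    smul_mem' := by
      rintro c z ⟨z1, z2, rfl⟩
      exact ⟨c • z1, c • z2, by
        rw [map_smul, map_smul, smul_add, smul_mul_assoc, smul_mul_assoc]⟩ }
  have hclosed : IsClosed (Mset : Set C) := by
    refine IsSeqClosed.isClosed ?_
    intro u z hu hz
    have hu' : ∀ m : ℕ, ∃ b₁ b₂ : B, u m = bc.ι b₁ * bc.e + bc.ι b₂ * (1 - bc.e) := hu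
    choose b₁ b₂ hb using hu'
    have hne : ∀ m : ℕ, u m * bc.e = bc.ι (b₁ m) * bc.e := by
      intro m
      rw [hb m, add_mul, mul_assoc, mul_assoc, bc.e_idem, hge, mul_zero, add_zero]
    have hng : ∀ m : ℕ, u m * (1 - bc.e) = bc.ι (b₂ m) * (1 - bc.e) := by
      intro m
      rw [hb m, add_mul, mul_assoc, mul_assoc, heg, one_sub_e_idem E bc, mul_zero, zero_add]
    have hucauchy : CauchySeq u := hz.cauchySeq
    have hb1c : CauchySeq b₁ := by
      refine cauchy_of_bound hucauchy fun m k => ?_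
      calc ‖b₁ m - b₁ k‖ ≤ 2 * ‖bc.ι (b₁ m - b₁ k) * bc.e‖ :=
            norm_corner_e E x bc Et hEt hx hidx _
        _ = 2 * ‖(u m - u k) * bc.e‖ := by rw [map_sub, sub_mul, sub_mul, hne m, hne k]
        _ ≤ 2 * ‖u m - u k‖ := by
            have h1 : ‖(u m - u k) * bc.e‖ ≤ ‖u m - u k‖ * ‖bc.e‖ := norm_mul_le _ _
            have h2 : ‖u m - u k‖ * ‖bc.e‖ ≤ ‖u m - u k‖ * 1 :=
              mul_le_mul_of_nonneg_left (proj_norm_le_one bc.e bc.e_star bc.e_idem)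
                (norm_nonneg _)
            rw [mul_one] at h2
            linarith
    have hb2c : CauchySeq b₂ := by
      refine cauchy_of_bound hucauchy fun m k => ?_
      calc ‖b₂ m - b₂ k‖ ≤ 2 * ‖bc.ι (b₂ m - b₂ k) * (1 - bc.e)‖ :=
            norm_corner_g E x bc Et hEt hx hidx _
        _ = 2 * ‖(u m - u k) * (1 - bc.e)‖ := by
            rw [map_sub, sub_mul, sub_mul, hng m, hng k]
        _ ≤ 2 * ‖u m - u k‖ := by
            have h1 : ‖(u m - u k) * (1 - bc.e)‖ ≤ ‖u m - u k‖ * ‖(1 : C) - bc.e‖ :=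
              norm_mul_le _ _
            have hg1 : ‖(1 : C) - bc.e‖ ≤ 1 := by
              refine proj_norm_le_one (1 - bc.e) ?_ (one_sub_e_idem E bc)
              rw [star_sub, star_one, bc.e_star]
            have h2 : ‖u m - u k‖ * ‖(1 : C) - bc.e‖ ≤ ‖u m - u k‖ * 1 :=
              mul_le_mul_of_nonneg_left hg1 (norm_nonneg _)
            rw [mul_one] at h2
            linarith
    obtain ⟨w1, hw1⟩ := cauchySeq_tendsto_of_complete hb1c
    obtain ⟨w2, hw2⟩ := cauchySeq_tendsto_of_complete hb2c
    have hlim : Filter.Tendsto u Filter.atTop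
        (nhds (bc.ι w1 * bc.e + bc.ι w2 * (1 - bc.e))) := by
      have t1 : Filter.Tendsto (fun m => bc.ι (b₁ m) * bc.e) Filter.atTop
          (nhds (bc.ι w1 * bc.e)) :=
        (((hiotacont.tendsto w1).comp hw1).mul tendsto_const_nhds)
      have t2 : Filter.Tendsto (fun m => bc.ι (b₂ m) * (1 - bc.e)) Filter.atTop
          (nhds (bc.ι w2 * (1 - bc.e))) :=
        (((hiotacont.tendsto w2).comp hw2).mul tendsto_const_nhds)
      exact (t1.add t2).congr fun m => (hb m).symm
    exact ⟨w1, w2, tendsto_nhds_unique hz hlim⟩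
  have hgen : {y : C | ∃ b c : B, y = bc.ι b * bc.e * bc.ι c} ⊆ (Mset : Set C) := by
    rintro y ⟨b, c, rfl⟩
    refine ⟨b * E.toFun c, b * (c - E.toFun c), ?_⟩
    have hsplitc : bc.ι c = bc.ι (E.toFun c) + bc.ι (c - E.toFun c) := by
      rw [← map_add]
      congr 1
      noncomm_ring
    calc bc.ι b * bc.e * bc.ι c
        = bc.ι b * bc.e * bc.ι (E.toFun c) + bc.ι b * bc.e * bc.ι (c - E.toFun c) := by
          rw [hsplitc, mul_add]
      _ = bc.ι (b * E.toFun c) * bc.e + bc.ι (b * (c - E.toFun c)) * (1 - bc.e) := by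
          congr 1
          · rw [mul_assoc, comm_e E bc (E.mem_range c), ← mul_assoc, ← map_mul]
          · rw [mul_assoc, e_iota_k E x bc Et hEt hx hidx _ (E_P E c), ← mul_assoc, ← map_mul]
  have hspan : Submodule.span ℂ {y : C | ∃ b c : B, y = bc.ι b * bc.e * bc.ι c} ≤ Mset :=
    Submodule.span_le.mpr hgen
  have htop := Submodule.topologicalClosure_minimal _ hspan hclosed
  rw [bc.dense] at htop
  intro z
  exact htop Submodule.mem_top

end Et
end Quasi
end Watatani

/-- if Index E = 2 then `(1−e_A) C*⟨B,e_A⟩ (1−e_A) = A(1−e_A)` and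
`a ↦ a(1−e_A)` is an isomorphism of `A` onto `A(1−e_A)`. -/
theorem corner_eq_A_of_index_two
    {B C : Type*} [NormedRing B] [StarRing B] [CStarRing B] [NormedAlgebra ℂ B]
    [StarModule ℂ B] [CompleteSpace B]
    [NormedRing C] [StarRing C] [CStarRing C] [NormedAlgebra ℂ C]
    [StarModule ℂ C] [CompleteSpace C]
    {A : StarSubalgebra ℂ B} (E : CondExp B A)
    {n : ℕ} (x : Fin n → B) (hx : IsQuasiBasis E x)
    (hidx : ∑ i, x i * star (x i) = (2 : B))
    (bc : BasicConstruction E C)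
    (Et : C →ₗ[ℂ] B)
    (hEt : ∀ b c : B, Et (bc.ι b * bc.e * bc.ι c) = ((2 : ℂ))⁻¹ • (b * c))
    :
    (∀ c : C, ∃ a ∈ A, (1 - bc.e) * c * (1 - bc.e) = bc.ι a * (1 - bc.e)) ∧
    ({y : C | ∃ a ∈ A, y = bc.ι a * (1 - bc.e)} =
      {y : C | ∃ c : C, y = (1 - bc.e) * c * (1 - bc.e)}) ∧
    Function.Injective (fun a : A => bc.ι (a : B) * (1 - bc.e)) := by
  letI instB : CStarAlgebra B :=
    { ‹NormedRing B›, ‹StarRing B›, ‹CStarRing B›, ‹NormedAlgebra ℂ B›,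
      ‹StarModule ℂ B›, ‹CompleteSpace B› with }
  letI instC : CStarAlgebra C :=
    { ‹NormedRing C›, ‹StarRing C›, ‹CStarRing C›, ‹NormedAlgebra ℂ C›,
      ‹StarModule ℂ C›, ‹CompleteSpace C› with }
  have key : ∀ c : C, ∃ a ∈ A, (1 - bc.e) * c * (1 - bc.e) = bc.ι a * (1 - bc.e) := by
    intro c
    obtain ⟨b₁, b₂, rfl⟩ := Watatani.M_all E x bc Et hEt hx hidx c
    refine ⟨E.toFun b₂, E.mem_range b₂, ?_⟩
    have h1 : (1 - bc.e) * (bc.ι b₁ * bc.e) * (1 - bc.e) = 0 := by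
      calc (1 - bc.e) * (bc.ι b₁ * bc.e) * (1 - bc.e)
          = (1 - bc.e) * bc.ι b₁ * (bc.e * (1 - bc.e)) := by simp only [mul_assoc]
        _ = 0 := by rw [Watatani.e_mul_one_sub_e E bc, mul_zero]
    have h2 : (1 - bc.e) * (bc.ι b₂ * (1 - bc.e)) * (1 - bc.e)
        = bc.ι (E.toFun b₂) * (1 - bc.e) := by
      calc (1 - bc.e) * (bc.ι b₂ * (1 - bc.e)) * (1 - bc.e)
          = (1 - bc.e) * bc.ι b₂ * ((1 - bc.e) * (1 - bc.e)) := by simp only [mul_assoc]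
        _ = (1 - bc.e) * bc.ι b₂ * (1 - bc.e) := by rw [Watatani.one_sub_e_idem E bc]
        _ = bc.ι (E.toFun b₂) * (1 - bc.e) := Watatani.corner_id E x bc Et hEt hx hidx b₂
    calc (1 - bc.e) * (bc.ι b₁ * bc.e + bc.ι b₂ * (1 - bc.e)) * (1 - bc.e)
        = (1 - bc.e) * (bc.ι b₁ * bc.e) * (1 - bc.e)
          + (1 - bc.e) * (bc.ι b₂ * (1 - bc.e)) * (1 - bc.e) := by noncomm_ring
      _ = bc.ι (E.toFun b₂) * (1 - bc.e) := by rw [h1, h2, zero_add]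
  refine ⟨key, ?_, ?_⟩
  · ext y
    constructor
    · rintro ⟨a, ha, rfl⟩
      refine ⟨bc.ι a, ?_⟩
      calc bc.ι a * (1 - bc.e)
          = bc.ι a * ((1 - bc.e) * (1 - bc.e)) := by rw [Watatani.one_sub_e_idem E bc]
        _ = (bc.ι a * (1 - bc.e)) * (1 - bc.e) := by simp only [mul_assoc]
        _ = ((1 - bc.e) * bc.ι a) * (1 - bc.e) := by rw [Watatani.comm_one_sub_e E bc ha]
        _ = (1 - bc.e) * bc.ι a * (1 - bc.e) := rfl
    · rintro ⟨c, rfl⟩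
      obtain ⟨a, ha, heq⟩ := key c
      exact ⟨a, ha, heq⟩
  · intro a₁ a₂ h
    simp only at h
    have h0 : bc.ι ((a₁ : B) - (a₂ : B)) * (1 - bc.e) = 0 := by
      rw [map_sub, sub_mul, h, sub_self]
    exact Subtype.ext (sub_eq_zero.mp (Watatani.iota_g_inj E x bc Et hEt hx hidx _ h0))


end
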